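/- Fix a partial assembly A of an n×n puzzle with q jig types, let E denote the number of edges of its contour graph C(A), and let i ≥ 0 be an integer. Then the probability (over the uniformly random carving ω) that A is feasible and sm(C(A), ω) ≤ i is at most q^{−E+i}. -/

import Mathlib

open Finset Filter

noncomputable section

/-- A piece of the `n × n` puzzle, identified with its cell in the original grid. -/
abbrev Cell (n : ℕ) := Fin n × Fin n

/-- The unit vector in direction `d` (`0` = right, `1` = up, `2` = left, `3` = down). -/
def dirVec (d : ZMod 4) : ℤ × ℤ :=
  if d = 0 then (1, 0) else if d = 1 then (0, 1) else if d = 2 then (-1, 0) else (0, -1)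

/-- The integer coordinates of a cell. -/
def cellZ {n : ℕ} (c : Cell n) : ℤ × ℤ := ((c.1 : ℤ), (c.2 : ℤ))

/-- A carving assigns a jig type (one of `q` possibilities) to each of the four
(cyclically ordered) sides of each of the `n²` pieces. -/
abbrev Carving (n q : ℕ) := Cell n → ZMod 4 → Fin q

/-- A carving is valid if each pair of coincident sides of adjacent pieces of the
original grid receives complementary jig types (`ι` is the complementation involution). -/
def IsValidCarving {n q : ℕ} (ι : Fin q → Fin q) (ω : Carving n q) : Prop :=
  ∀ p p' : Cell n, ∀ d : ZMod 4,
    cellZ p' = cellZ p + dirVec d → ω p' (d + 2) = ι (ω p d)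

open scoped Classical in
/-- The probability of the event `P` for a carving chosen uniformly at random among
all valid carvings. -/
def puzzleProb {n q : ℕ} (ι : Fin q → Fin q) (P : Carving n q → Prop) : ℝ :=
  ((Finset.univ.filter fun ω : Carving n q => IsValidCarving ι ω ∧ P ω).card : ℝ) /
  ((Finset.univ.filter fun ω : Carving n q => IsValidCarving ι ω).card : ℝ)

/-- A complete assembly: a bijective placement of the pieces onto the cells of the
`n × n` grid together with an orientation (`ℤ/4`) for each piece. -/
structure Assembly (n : ℕ) where
  pos : Equiv.Perm (Cell n)
  rot : Cell n → ZMod 4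

/-- The planted assembly keeps every piece in its original position and orientation. -/
def planted (n : ℕ) : Assembly n := ⟨Equiv.refl _, fun _ => 0⟩

/-- A complete assembly is feasible for the carving `ω` if all pairs of abutting sides
carry complementary jig types.  The side of piece `p` facing direction `d` after `p` is
rotated by `A.rot p` quarter turns is its original side `d - A.rot p`. -/
def Assembly.Feasible {n q : ℕ} (ι : Fin q → Fin q) (A : Assembly n) (ω : Carving n q) :
    Prop :=
  ∀ p p' : Cell n, ∀ d : ZMod 4,
    cellZ (A.pos p') = cellZ (A.pos p) + dirVec d →
    ω p' (d + 2 - A.rot p') = ι (ω p (d - A.rot p))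

/-- The carving of the grid obtained by reassembling the pieces according to `A`:
side `d` of the grid cell `c` receives the jig type of the corresponding side of the
piece placed on `c`. -/
def Assembly.carving {n q : ℕ} (A : Assembly n) (ω : Carving n q) : Carving n q :=
  fun c d => ω (A.pos.symm c) (d - A.rot (A.pos.symm c))

/-- Rotation of the grid by 90 degrees. -/
def rotCell {n : ℕ} : Equiv.Perm (Cell n) where
  toFun c := (c.2.rev, c.1)
  invFun c := (c.2, c.1.rev)
  left_inv c := by simp
  right_inv c := by simp

/-- Global rotation of a carving of the grid by 90 degrees. -/
def rotateCarving {n q : ℕ} (ω : Carving n q) : Carving n q :=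
  fun c d => ω (rotCell.symm c) (d - 1)

/-- Two solutions are similar if they differ only by a global rotation of the puzzle,
a permutation of pieces with identical carvings, and rotations of pieces whose carving
is rotation-invariant; equivalently, if they induce the same carving of the grid up to
a global rotation. -/
def PuzzleSimilar {n q : ℕ} (A B : Assembly n) (ω : Carving n q) : Prop :=
  ∃ r : Fin 4, B.carving ω = rotateCarving^[r.val] (A.carving ω)

/-- The planted assembly rotated globally by `r` quarter turns. -/
def rotatedPlanted (n : ℕ) (r : Fin 4) : Assembly n :=
  ⟨rotCell ^ r.val, fun _ => (r.val : ZMod 4)⟩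

/-- The cell `c` belongs to the `k × k` window with lower-left corner `(a, b)`. -/
def inWindow {n : ℕ} (a b k : ℕ) (c : Cell n) : Prop :=
  a ≤ c.1.val ∧ c.1.val < a + k ∧ b ≤ c.2.val ∧ c.2.val < b + k

open scoped Classical in
/-- The number of dual edges of the `k × k` window at `(a, b)` (each dual edge recorded
once, as `(c, c', d)` with `d ∈ {right, up}`) whose abutting jig types, for the carving
induced by the assembly `A`, form the complementary pair `{j, ι j}`. -/
def windowTypeCount {n q : ℕ} (ι : Fin q → Fin q) (A : Assembly n) (ω : Carving n q)
    (a b k : ℕ) (j : Fin q) : ℕ :=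
  (Finset.univ.filter fun x : Cell n × Cell n × Fin 2 =>
    inWindow a b k x.1 ∧ inWindow a b k x.2.1 ∧
    cellZ x.2.1 = cellZ x.1 + dirVec (x.2.2.val : ZMod 4) ∧
    (A.carving ω x.1 (x.2.2.val : ZMod 4) = j ∨
      A.carving ω x.1 (x.2.2.val : ZMod 4) = ι j)).card

open scoped Classical in
/-- The shape multiplicity of the `k × k` window at `(a, b)`: the sum, over unordered
complementary pairs `J = {j, ι j}`, of `⌊(number of dual edges of the window of type J)/2⌋`. -/
def windowSM {n q : ℕ} (ι : Fin q → Fin q) (A : Assembly n) (ω : Carving n q)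
    (a b k : ℕ) : ℕ :=
  ∑ j ∈ Finset.univ.filter (fun j : Fin q => j ≤ ι j),
    windowTypeCount ι A ω a b k j / 2

/-- A feasible complete assembly is `k`-good if every `k × k` window touching the boundary
of the puzzle has shape multiplicity at most `1`, and every other `k × k` window has shape
multiplicity at most `2`. -/
def KGood {n q : ℕ} (ι : Fin q → Fin q) (A : Assembly n) (ω : Carving n q) (k : ℕ) :
    Prop :=
  A.Feasible ι ω ∧
    ∀ a b : ℕ, a + k ≤ n → b + k ≤ n →
      windowSM ι A ω a b k ≤ 2 ∧
      ((a = 0 ∨ b = 0 ∨ a + k = n ∨ b + k = n) → windowSM ι A ω a b k ≤ 1)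

/-- A partial assembly: an injective placement of a subset of the pieces into the square
grid `ℤ²`, together with an orientation for each placed piece. -/
structure PartialAssembly (n : ℕ) where
  pieces : Finset (Cell n)
  pos : Cell n → ℤ × ℤ
  rot : Cell n → ZMod 4
  pos_inj : ∀ p ∈ pieces, ∀ p' ∈ pieces, pos p = pos p' → p = p'

/-- A partial assembly is feasible for `ω` if all pairs of abutting sides carry
complementary jig types. -/
def PartialAssembly.Feasible {n q : ℕ} (ι : Fin q → Fin q) (A : PartialAssembly n)
    (ω : Carving n q) : Prop :=
  ∀ p ∈ A.pieces, ∀ p' ∈ A.pieces, ∀ d : ZMod 4,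
    A.pos p' = A.pos p + dirVec d →
    ω p' (d + 2 - A.rot p') = ι (ω p (d - A.rot p))

open scoped Classical in
/-- The edges of the contour graph `C(A)`: the dual edges of `A` (each recorded once, as
`(p, p', d)` with `d ∈ {right, up}`, `p'` being placed in direction `d` from `p`) whose two
abutting piece sides are not coincident in the planted assembly. -/
def contourEdges {n : ℕ} (A : PartialAssembly n) : Finset (Cell n × Cell n × Fin 2) :=
  Finset.univ.filter fun x =>
    x.1 ∈ A.pieces ∧ x.2.1 ∈ A.pieces ∧
    A.pos x.2.1 = A.pos x.1 + dirVec (x.2.2.val : ZMod 4) ∧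
    ¬ (A.rot x.2.1 = A.rot x.1 ∧
        cellZ x.2.1 = cellZ x.1 + dirVec ((x.2.2.val : ZMod 4) - A.rot x.1))

/-- The piece sides lying across the edges of the contour graph of `A`. -/
def crossingSides {n : ℕ} (A : PartialAssembly n) : Set (Cell n × ZMod 4) :=
  {ps | ∃ x ∈ contourEdges A,
    ps = (x.1, (x.2.2.val : ZMod 4) - A.rot x.1) ∨
    ps = (x.2.1, (x.2.2.val : ZMod 4) + 2 - A.rot x.2.1)}

/-- Two piece sides are coincident in the planted assembly. -/
def CoincidentPlanted {n : ℕ} (ps ps' : Cell n × ZMod 4) : Prop :=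
  cellZ ps'.1 = cellZ ps.1 + dirVec ps.2 ∧ ps'.2 = ps.2 + 2

open scoped Classical in
/-- The shape multiplicity `sm(C(A), ω)` of the contour graph of `A` with respect to `ω`:
the sum, over unordered complementary pairs `J = {j, ι j}`, of
`⌊(number of contour edges of type J)/2⌋`. -/
def contourSM {n q : ℕ} (ι : Fin q → Fin q) (A : PartialAssembly n) (ω : Carving n q) :
    ℕ :=
  ∑ j ∈ Finset.univ.filter (fun j : Fin q => j ≤ ι j),
    ((contourEdges A).filter fun x =>
      ω x.1 ((x.2.2.val : ZMod 4) - A.rot x.1) = j ∨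
      ω x.1 ((x.2.2.val : ZMod 4) - A.rot x.1) = ι j).card / 2

end



-- auxiliary development
set_option linter.unusedSectionVars false
open Finset

namespace Stmt10


variable {S : Type*} [Fintype S] [DecidableEq S] {q : ℕ}

def AValid (ι : Fin q → Fin q) (m : S → S) (ω : S → Fin q) : Prop :=
  ∀ s, m s ≠ s → ω (m s) = ι (ω s)

def ASat (ι : Fin q → Fin q) (T : Finset (S × S)) (ω : S → Fin q) : Prop :=
  ∀ t ∈ T, ω t.2 = ι (ω t.1)

def acnt (ι : Fin q → Fin q) (T : Finset (S × S)) (ω : S → Fin q) (j : Fin q) : ℕ :=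
  (T.filter fun t => ω t.1 = j ∨ ω t.1 = ι j).card

def asm (ι : Fin q → Fin q) (T : Finset (S × S)) (ω : S → Fin q) : ℕ :=
  ∑ j ∈ Finset.univ.filter (fun j : Fin q => j ≤ ι j), acnt ι T ω j / 2

def Good (m : S → S) (T : Finset (S × S)) : Prop :=
  (∀ t ∈ T, t.1 ≠ t.2 ∧ m t.1 ≠ t.2) ∧
  (∀ t ∈ T, ∀ t' ∈ T, t ≠ t' →
    t.1 ≠ t'.1 ∧ t.1 ≠ t'.2 ∧ t.2 ≠ t'.1 ∧ t.2 ≠ t'.2)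

def modif (ι : Fin q → Fin q) (m : S → S) (ω : S → Fin q) (e : S) (a : Fin q) :
    S → Fin q :=
  fun x => if x = e then a else if x = m e then ι a else ω x

section lemmas

variable {ι : Fin q → Fin q} {m : S → S}

lemma iota_inj (hι : ∀ j, ι (ι j) = j) : Function.Injective ι :=
  fun x y h => by rw [← hι x, h, hι]

lemma modif_self (ω : S → Fin q) (e : S) (a : Fin q) : modif ι m ω e a e = a := by
  simp [modif]

lemma modif_other {x e : S} (ω : S → Fin q) (a : Fin q) (h1 : x ≠ e) (h2 : x ≠ m e) :
    modif ι m ω e a x = ω x := by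
  simp [modif, h1, h2]

lemma modif_me {e : S} (ω : S → Fin q) (a : Fin q) (h : m e ≠ e) :
    modif ι m ω e a (m e) = ι a := by
  simp [modif, h]

lemma valid_modif (hι : ∀ j, ι (ι j) = j) (hm : ∀ s, m (m s) = s)
    {ω : S → Fin q} (hω : AValid ι m ω) (e : S) (a : Fin q) :
    AValid ι m (modif ι m ω e a) := by
  intro s hs
  by_cases h1 : s = e
  · subst h1
    rw [modif_me ω a hs, modif_self]
  · by_cases h2 : s = m e
    · subst h2
      have hme : m e ≠ e := h1
      rw [hm e, modif_self, modif_me ω a hme, hι]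
    · have hm1 : m s ≠ e := fun h => h2 (by rw [← h, hm])
      have hm2 : m s ≠ m e := fun h => h1 (by rw [← hm s, h, hm])
      rw [modif_other ω a hm1 hm2, modif_other ω a h1 h2]
      exact hω s hs

lemma modif_modif (hι : ∀ j, ι (ι j) = j) (hm : ∀ s, m (m s) = s)
    {ω : S → Fin q} (hω : AValid ι m ω) (e : S) (a : Fin q) :
    modif ι m (modif ι m ω e a) e (ω e) = ω := by
  funext x
  by_cases h1 : x = e
  · subst h1; rw [modif_self]
  · by_cases h2 : x = m e
    · subst h2
      have hme : m e ≠ e := h1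
      rw [modif_me _ _ hme]
      exact (hω e (fun h => hme (by rw [h]))).symm
    · rw [modif_other _ _ h1 h2, modif_other _ _ h1 h2]

/-- The basic injection step: modifying on the class `{e, m e}` with a fresh value. -/
lemma step (hι : ∀ j, ι (ι j) = j) (hm : ∀ s, m (m s) = s)
    (A B : Finset (S → Fin q)) (e s1 : S) (h1 : s1 ≠ e) (h2 : s1 ≠ m e)
    (hval : ∀ ω ∈ A, AValid ι m ω)
    (hrec : ∀ ω ∈ A, ω e = ι (ω s1))
    (hmap : ∀ ω ∈ A, ∀ a : Fin q, modif ι m ω e a ∈ B) :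
    A.card * q ≤ B.card := by
  have hcard : (A ×ˢ (univ : Finset (Fin q))).card = A.card * q := by
    simp [Finset.card_product]
  rw [← hcard]
  apply Finset.card_le_card_of_injOn (fun p => modif ι m p.1 e p.2)
  · rintro ⟨ω, a⟩ hp
    rw [Finset.mem_coe, Finset.mem_product] at hp
    exact hmap ω hp.1 a
  · rintro ⟨ω, a⟩ hp ⟨ω', a'⟩ hp' heq
    rw [Finset.mem_coe, Finset.mem_product] at hp hp'
    simp only at heq
    have ha : a = a' := by
      have := congrFun heq e
      rwa [modif_self, modif_self] at this
    have hω : ω = ω' := by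
      have e1 : ω e = ι (modif ι m ω e a s1) := by
        rw [modif_other _ _ h1 h2]; exact hrec ω hp.1
      have e2 : ω' e = ι (modif ι m ω' e a' s1) := by
        rw [modif_other _ _ h1 h2]; exact hrec ω' hp'.1
      have : ω e = ω' e := by rw [e1, e2, heq]
      calc ω = modif ι m (modif ι m ω e a) e (ω e) :=
              (modif_modif hι hm (hval ω hp.1) e a).symm
        _ = modif ι m (modif ι m ω' e a') e (ω' e) := by rw [heq, this]
        _ = ω' := modif_modif hι hm (hval ω' hp'.1) e a'
    exact Prod.ext hω ha

lemma pair_iff (hι : ∀ j, ι (ι j) = j) {a b : Fin q} (j : Fin q)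
    (hb : b = a ∨ b = ι a) : (b = j ∨ b = ι j) ↔ (a = j ∨ a = ι j) := by
  rcases hb with hb | hb <;> subst hb
  · rfl
  · constructor
    · rintro (h | h)
      · right; rw [← h, hι]
      · left; exact iota_inj hι h
    · rintro (h | h)
      · right; rw [h]
      · left; rw [h, hι]

lemma acnt_insert (ω : S → Fin q) (j : Fin q) {t : S × S} {U : Finset (S × S)}
    (h : t ∉ U) :
    acnt ι (insert t U) ω j =
      acnt ι U ω j + (if ω t.1 = j ∨ ω t.1 = ι j then 1 else 0) := by
  unfold acnt
  rw [Finset.filter_insert]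
  split
  · rw [Finset.card_insert_of_notMem (fun hc => h (Finset.mem_of_mem_filter _ hc))]
  · simp

lemma acnt_congr {ω ω' : S → Fin q} {U : Finset (S × S)} (j : Fin q)
    (h : ∀ t ∈ U, ω' t.1 = ω t.1) : acnt ι U ω' j = acnt ι U ω j := by
  unfold acnt
  apply Finset.card_bij (fun t _ => t) ?_ (fun a b _ _ h => h)
    (fun t ht => ⟨t, by rw [Finset.mem_filter] at ht ⊢; exact ⟨ht.1, by rw [h t ht.1]; exact ht.2⟩, rfl⟩)
  intro t ht
  rw [Finset.mem_filter] at ht ⊢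
  exact ⟨ht.1, by rw [← h t ht.1]; exact ht.2⟩

lemma asm_mono {ω : S → Fin q} {U U' : Finset (S × S)} (ι' : Fin q → Fin q)
    (h : ∀ j, acnt ι' U' ω j ≤ acnt ι' U ω j) : asm ι' U' ω ≤ asm ι' U ω :=
  Finset.sum_le_sum fun j _ => Nat.div_le_div_right (h j)

lemma acnt_subset {ω : S → Fin q} {U U' : Finset (S × S)} (h : U' ⊆ U) (j : Fin q) :
    acnt ι U' ω j ≤ acnt ι U ω j :=
  Finset.card_le_card (Finset.filter_subset_filter _ h)

/-- The unique representative of the pair `{a, ι a}` among `{j : j ≤ ι j}`. -/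
lemma sum_indicator_pair (hι : ∀ j, ι (ι j) = j) (a : Fin q) :
    ∑ j ∈ Finset.univ.filter (fun j : Fin q => j ≤ ι j),
      (if a = j ∨ a = ι j then 1 else 0) = 1 := by
  set j0 : Fin q := if a ≤ ι a then a else ι a with hj0
  have hj0mem : j0 ∈ Finset.univ.filter (fun j : Fin q => j ≤ ι j) := by
    rw [Finset.mem_filter]
    refine ⟨Finset.mem_univ _, ?_⟩
    rw [hj0]; split
    · assumption
    · rw [hι]; exact le_of_not_ge (by assumption)
  have hiff : ∀ j ∈ Finset.univ.filter (fun j : Fin q => j ≤ ι j),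
      (a = j ∨ a = ι j) ↔ j = j0 := by
    intro j hj
    rw [Finset.mem_filter] at hj
    have hj2 := hj.2
    constructor
    · rintro (h | h)
      · subst h
        rw [hj0, if_pos hj2]
      · have hj' : j = ι a := by rw [h, hι]
        subst hj'
        rw [hι] at hj2
        rw [hj0]; split
        · next hle => exact le_antisymm hj2 hle
        · rfl
    · intro h
      subst h
      rw [hj0]; split
      · left; rfl
      · right; rw [hι]
  calc ∑ j ∈ Finset.univ.filter (fun j : Fin q => j ≤ ι j),
        (if a = j ∨ a = ι j then 1 else 0)
      = ∑ j ∈ Finset.univ.filter (fun j : Fin q => j ≤ ι j),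
        (if j = j0 then 1 else 0) := by
        apply Finset.sum_congr rfl
        intro j hj
        rw [if_congr (hiff j hj) rfl rfl]
    _ = 1 := by rw [Finset.sum_ite_eq' _ _ (fun _ => 1), if_pos hj0mem]


lemma Good_subset {m : S → S} {T U : Finset (S × S)} (h : U ⊆ T) (hG : Good m T) :
    Good m U :=
  ⟨fun t ht => hG.1 t (h ht), fun t ht t' ht' hne => hG.2 t (h ht) t' (h ht') hne⟩

open scoped Classical in
theorem abstract_bound (ι : Fin q → Fin q) (m : S → S)
    (hι : ∀ j, ι (ι j) = j) (hm : ∀ s, m (m s) = s) (hq : 1 ≤ q) :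
    ∀ (N : ℕ) (T : Finset (S × S)), T.card = N → Good m T → ∀ i : ℕ,
    (univ.filter fun ω : S → Fin q =>
        AValid ι m ω ∧ ASat ι T ω ∧ asm ι T ω ≤ i).card * q ^ T.card ≤
      (univ.filter fun ω : S → Fin q => AValid ι m ω).card * q ^ i := by
  intro N
  induction N using Nat.strong_induction_on with
  | _ N IH =>
  intro T hcard hGood i
  rcases Finset.eq_empty_or_nonempty T with hT | ⟨t1, ht1⟩
  · subst hT
    simp only [Finset.card_empty, pow_zero, mul_one]
    refine le_trans (Finset.card_le_card ?_) (Nat.le_mul_of_pos_right _ (pow_pos (by omega) i))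
    intro ω hω
    rw [Finset.mem_filter] at hω ⊢
    exact ⟨hω.1, hω.2.1⟩
  · -- notation
    have hG1 := hGood.1 t1 ht1
    set s1 := t1.1 with hs1def
    set e := t1.2 with hedef
    have hs1e : s1 ≠ e := hG1.1
    have hms1e : m s1 ≠ e := hG1.2
    have hs1me : s1 ≠ m e := fun h => hms1e (by rw [h, hm])
    have hNpos : 1 ≤ N := by
      rw [← hcard]; exact Finset.card_pos.2 ⟨t1, ht1⟩
    -- the current event set
    set Aset := (univ.filter fun ω : S → Fin q =>
        AValid ι m ω ∧ ASat ι T ω ∧ asm ι T ω ≤ i) with hAset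
    have hAval : ∀ ω ∈ Aset, AValid ι m ω := by
      intro ω hω; rw [hAset, Finset.mem_filter] at hω; exact hω.2.1
    have hAsat : ∀ ω ∈ Aset, ASat ι T ω := by
      intro ω hω; rw [hAset, Finset.mem_filter] at hω; exact hω.2.2.1
    have hAsm : ∀ ω ∈ Aset, asm ι T ω ≤ i := by
      intro ω hω; rw [hAset, Finset.mem_filter] at hω; exact hω.2.2.2
    have hrec : ∀ ω ∈ Aset, ω e = ι (ω s1) := fun ω hω => hAsat ω hω t1 ht1
    by_cases hB : ∃ t2 ∈ T.erase t1, m e = t2.1 ∨ m e = t2.2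
    · -- Case B : the partner of e is used by another constraint t2
      obtain ⟨t2, ht2, ho⟩ := hB
      have ht2T : t2 ∈ T := Finset.mem_of_mem_erase ht2
      have ht2ne : t2 ≠ t1 := Finset.ne_of_mem_erase ht2
      have hpair := hGood.2 t2 ht2T t1 ht1 ht2ne
      have hG2 := hGood.1 t2 ht2T
      have hme : m e ≠ e := by
        intro h
        rcases ho with ho | ho
        · exact hpair.2.1 (by rw [← ho, h])
        · exact hpair.2.2.2 (by rw [← ho, h])
      set s2 := if m e = t2.1 then t2.2 else t2.1 with hs2def
      have ho2 : t2 = (m e, s2) ∨ t2 = (s2, m e) := by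
        rw [hs2def]; split
        · left; next h => exact Prod.ext h.symm rfl
        · right; next h =>
            rcases ho with ho | ho
            · exact absurd ho h
            · exact Prod.ext rfl ho.symm
      have hs2end : s2 = t2.1 ∨ s2 = t2.2 := by
        rcases ho2 with h | h <;> rw [h] <;> [right; left] <;> rfl
      have hs2e : s2 ≠ e := by
        rcases hs2end with h | h
        · rw [h]; exact hpair.2.1
        · rw [h]; exact hpair.2.2.2
      have hs2s1 : s2 ≠ s1 := by
        rcases hs2end with h | h
        · rw [h]; exact hpair.1
        · rw [h]; exact hpair.2.2.1
      have hs2me : s2 ≠ m e := by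
        have hne : t2.1 ≠ t2.2 := hG2.1
        rcases ho2 with h | h
        · rw [h] at hne
          exact fun hc => hne hc.symm
        · rw [h] at hne
          exact hne
      -- the reduced constraint set
      set T'' := (T.erase t1).erase t2 with hT''def
      have ht2notin : t2 ∉ T'' := Finset.notMem_erase _ _
      have ht1notin : t1 ∉ insert t2 T'' := by
        rw [Finset.mem_insert]
        rintro (h | h)
        · exact ht2ne h.symm
        · exact Finset.notMem_erase _ _ (Finset.mem_of_mem_erase h)
      have hTdecomp : T = insert t1 (insert t2 T'') := by
        rw [hT''def, Finset.insert_erase ht2, Finset.insert_erase ht1]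
      have hT''card : T''.card = N - 2 := by
        have h1 : (T.erase t1).card = N - 1 := by rw [Finset.card_erase_of_mem ht1, hcard]
        rw [hT''def, Finset.card_erase_of_mem ht2, h1]
        omega
      have hNge2 : 2 ≤ N := by
        have := Finset.card_pos.2 ⟨t2, ht2⟩
        rw [Finset.card_erase_of_mem ht1, hcard] at this
        omega
      -- endpoints of T'' avoid the class {e, m e}
      have havoid : ∀ t ∈ T'', t.1 ≠ e ∧ t.1 ≠ m e ∧ t.2 ≠ e ∧ t.2 ≠ m e := by
        intro t ht
        have htT : t ∈ T := Finset.mem_of_mem_erase (Finset.mem_of_mem_erase ht)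
        have htne1 : t ≠ t1 := Finset.ne_of_mem_erase (Finset.mem_of_mem_erase ht)
        have htne2 : t ≠ t2 := Finset.ne_of_mem_erase ht
        have hp1 := hGood.2 t htT t1 ht1 htne1
        have hp2 := hGood.2 t htT t2 ht2T htne2
        have hmem : m e = t2.1 ∨ m e = t2.2 := ho
        constructor
        · exact hp1.2.1
        constructor
        · rcases hmem with h | h
          · rw [← h] at hp2; exact hp2.1
          · rw [← h] at hp2; exact hp2.2.1
        constructor
        · exact hp1.2.2.2
        · rcases hmem with h | h
          · rw [← h] at hp2; exact hp2.2.2.1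
          · rw [← h] at hp2; exact hp2.2.2.2
      -- value facts
      have hvme : ∀ ω ∈ Aset, ω (m e) = ω s1 := by
        intro ω hω
        have := hAval ω hω e hme
        rw [this, hrec ω hω, hι]
      have hvs2 : ∀ ω ∈ Aset, ω s2 = ι (ω s1) := by
        intro ω hω
        rcases ho2 with h | h
        · have := hAsat ω hω t2 ht2T
          rw [h] at this
          simpa [hvme ω hω] using this
        · have := hAsat ω hω t2 ht2T
          rw [h] at this
          simp only at this
          rw [hvme ω hω] at this
          rw [← hι (ω s2), ← this]
      -- count decomposition
      have hacnt : ∀ ω ∈ Aset, ∀ j : Fin q,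
          acnt ι T ω j = acnt ι T'' ω j +
            (if ω s1 = j ∨ ω s1 = ι j then 2 else 0) := by
        intro ω hω j
        have hpred2 : (ω t2.1 = j ∨ ω t2.1 = ι j) ↔ (ω s1 = j ∨ ω s1 = ι j) := by
          apply pair_iff hι
          rcases ho2 with h | h
          · rw [h]; left; exact hvme ω hω
          · rw [h]; right; exact hvs2 ω hω
        rw [hTdecomp]
        rw [acnt_insert ω j ht1notin, acnt_insert ω j ht2notin]
        rw [if_congr hpred2 rfl rfl]
        have : (ω t1.1 = j ∨ ω t1.1 = ι j) ↔ (ω s1 = j ∨ ω s1 = ι j) := by rw [← hs1def]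
        rw [if_congr this rfl rfl]
        split <;> omega
      -- shape multiplicity decomposition
      have hasm : ∀ ω ∈ Aset, asm ι T ω = asm ι T'' ω + 1 := by
        intro ω hω
        unfold asm
        have : ∀ j ∈ Finset.univ.filter (fun j : Fin q => j ≤ ι j),
            acnt ι T ω j / 2 = acnt ι T'' ω j / 2 +
              (if ω s1 = j ∨ ω s1 = ι j then 1 else 0) := by
          intro j _
          rw [hacnt ω hω j]
          split <;> omega
        rw [Finset.sum_congr rfl this, Finset.sum_add_distrib,
          sum_indicator_pair hι (ω s1)]
      -- if i = 0 the event is empty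
      rcases Nat.eq_zero_or_pos i with hi0 | hipos
      · subst hi0
        have : Aset = ∅ := by
          rw [Finset.eq_empty_iff_forall_notMem]
          intro ω hω
          have h1 := hAsm ω hω
          rw [hasm ω hω] at h1
          omega
        rw [this]
        simp
      · -- the injection step
        set B := (univ.filter fun ω : S → Fin q =>
            AValid ι m ω ∧ ASat ι T'' ω ∧ asm ι T'' ω ≤ i - 1) with hBdef
        have hstep : Aset.card * q ≤ B.card := by
          apply step hι hm Aset B e s1 hs1e hs1me hAval hrec
          intro ω hω a
          rw [hBdef, Finset.mem_filter]
          refine ⟨Finset.mem_univ _, valid_modif hι hm (hAval ω hω) e a, ?_, ?_⟩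
          · intro t ht
            have hav := havoid t ht
            rw [modif_other ω a hav.2.2.1 hav.2.2.2, modif_other ω a hav.1 hav.2.1]
            exact hAsat ω hω t (Finset.mem_of_mem_erase (Finset.mem_of_mem_erase ht))
          · have hc : ∀ j, acnt ι T'' (modif ι m ω e a) j = acnt ι T'' ω j := by
              intro j
              apply acnt_congr
              intro t ht
              have hav := havoid t ht
              exact modif_other ω a hav.1 hav.2.1
            have : asm ι T'' (modif ι m ω e a) = asm ι T'' ω := by
              unfold asm
              exact Finset.sum_congr rfl fun j _ => by rw [hc j]
            rw [this]
            have h1 := hAsm ω hω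
            rw [hasm ω hω] at h1
            omega
        have hGood'' : Good m T'' :=
          Good_subset ((Finset.erase_subset _ _).trans (Finset.erase_subset _ _)) hGood
        have hIH := IH (N - 2) (by omega) T'' hT''card hGood'' (i - 1)
        rw [hT''card] at hIH
        calc Aset.card * q ^ T.card
            = Aset.card * q ^ N := by rw [hcard]
          _ = Aset.card * q * q ^ (N - 1) := by
              rw [mul_assoc, ← pow_succ']
              congr 2
              omega
          _ ≤ B.card * q ^ (N - 1) := Nat.mul_le_mul_right _ hstep
          _ = B.card * q ^ (N - 2) * q := by
              rw [mul_assoc, ← pow_succ]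
              congr 2
              omega
          _ ≤ (univ.filter fun ω : S → Fin q => AValid ι m ω).card * q ^ (i - 1) * q :=
              Nat.mul_le_mul_right _ hIH
          _ = (univ.filter fun ω : S → Fin q => AValid ι m ω).card * q ^ i := by
              rw [mul_assoc, ← pow_succ]
              congr 2
              omega
    · -- Case A : the class of e is free apart from t1
      push_neg at hB
      set T' := T.erase t1 with hT'def
      have hT'card : T'.card = N - 1 := by
        rw [hT'def, Finset.card_erase_of_mem ht1, hcard]
      have havoid : ∀ t ∈ T', t.1 ≠ e ∧ t.1 ≠ m e ∧ t.2 ≠ e ∧ t.2 ≠ m e := by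
        intro t ht
        have htT : t ∈ T := Finset.mem_of_mem_erase ht
        have htne1 : t ≠ t1 := Finset.ne_of_mem_erase ht
        have hp1 := hGood.2 t htT t1 ht1 htne1
        have hb := hB t ht
        exact ⟨hp1.2.1, fun h => hb.1 h.symm, hp1.2.2.2, fun h => hb.2 h.symm⟩
      set B := (univ.filter fun ω : S → Fin q =>
          AValid ι m ω ∧ ASat ι T' ω ∧ asm ι T' ω ≤ i) with hBdef
      have hstep : Aset.card * q ≤ B.card := by
        apply step hι hm Aset B e s1 hs1e hs1me hAval hrec
        intro ω hω a
        rw [hBdef, Finset.mem_filter]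
        refine ⟨Finset.mem_univ _, valid_modif hι hm (hAval ω hω) e a, ?_, ?_⟩
        · intro t ht
          have hav := havoid t ht
          rw [modif_other ω a hav.2.2.1 hav.2.2.2, modif_other ω a hav.1 hav.2.1]
          exact hAsat ω hω t (Finset.mem_of_mem_erase ht)
        · have hc : ∀ j, acnt ι T' (modif ι m ω e a) j = acnt ι T' ω j := by
            intro j
            apply acnt_congr
            intro t ht
            have hav := havoid t ht
            exact modif_other ω a hav.1 hav.2.1
          have heq : asm ι T' (modif ι m ω e a) = asm ι T' ω := by
            unfold asm
            exact Finset.sum_congr rfl fun j _ => by rw [hc j]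
          rw [heq]
          refine le_trans (asm_mono ι fun j => acnt_subset (Finset.erase_subset _ _) j)
            (hAsm ω hω)
      have hGood' : Good m T' := Good_subset (Finset.erase_subset _ _) hGood
      have hIH := IH (N - 1) (by omega) T' hT'card hGood' i
      rw [hT'card] at hIH
      calc Aset.card * q ^ T.card
          = Aset.card * q ^ N := by rw [hcard]
        _ = Aset.card * q * q ^ (N - 1) := by
            rw [mul_assoc, ← pow_succ']
            congr 2
            omega
        _ ≤ B.card * q ^ (N - 1) := Nat.mul_le_mul_right _ hstep
        _ ≤ (univ.filter fun ω : S → Fin q => AValid ι m ω).card * q ^ i := hIH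


end lemmas

section Concrete

variable {n q : ℕ}

lemma dirVec_add_two : ∀ d : ZMod 4, dirVec (d + 2) = - dirVec d := by decide

lemma add_two_ne : ∀ d : ZMod 4, d + 2 ≠ d := by decide

lemma two_add_two : (2 : ZMod 4) + 2 = 0 := by decide

lemma zmod4_cases : ∀ d : ZMod 4, d = 0 ∨ d = 1 ∨ d = 2 ∨ d = 3 := by decide

lemma fin2_cast_inj : ∀ a b : Fin 2, ((a.val : ZMod 4)) = ((b.val : ZMod 4)) → a = b := by
  decide

lemma fin2_ne_add_two : ∀ a b : Fin 2, ((a.val : ZMod 4)) ≠ ((b.val : ZMod 4)) + 2 := by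
  decide

lemma cellZ_inj : Function.Injective (cellZ (n := n)) := by
  intro a b h
  have h1 : ((a.1 : ℤ), (a.2 : ℤ)) = ((b.1 : ℤ), (b.2 : ℤ)) := h
  have h2 : (a.1 : ℤ) = (b.1 : ℤ) := congrArg Prod.fst h1
  have h3 : (a.2 : ℤ) = (b.2 : ℤ) := congrArg Prod.snd h1
  exact Prod.ext (Fin.ext (by exact_mod_cast h2)) (Fin.ext (by exact_mod_cast h3))

open scoped Classical in
/-- The planted matching on piece sides. -/
noncomputable def pm (n : ℕ) : Cell n × ZMod 4 → Cell n × ZMod 4 := fun s =>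
  if h : ∃ p' : Cell n, cellZ p' = cellZ s.1 + dirVec s.2 then (h.choose, s.2 + 2) else s

lemma pm_eq (s : Cell n × ZMod 4) (p' : Cell n)
    (hp' : cellZ p' = cellZ s.1 + dirVec s.2) : pm n s = (p', s.2 + 2) := by
  unfold pm
  rw [dif_pos ⟨p', hp'⟩]
  have hch := (⟨p', hp'⟩ : ∃ p'' : Cell n, cellZ p'' = cellZ s.1 + dirVec s.2).choose_spec
  have : (⟨p', hp'⟩ : ∃ p'' : Cell n, cellZ p'' = cellZ s.1 + dirVec s.2).choose = p' :=
    cellZ_inj (hch.trans hp'.symm)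
  rw [this]

lemma pm_invol : ∀ s : Cell n × ZMod 4, pm n (pm n s) = s := by
  intro s
  by_cases h : ∃ p' : Cell n, cellZ p' = cellZ s.1 + dirVec s.2
  · obtain ⟨p', hp'⟩ := h
    rw [pm_eq s p' hp']
    have h2 : cellZ s.1 = cellZ ((p', s.2 + 2) : Cell n × ZMod 4).1
        + dirVec ((p', s.2 + 2) : Cell n × ZMod 4).2 := by
      show cellZ s.1 = cellZ p' + dirVec (s.2 + 2)
      rw [dirVec_add_two, hp']
      ring
    rw [pm_eq (p', s.2 + 2) s.1 h2]
    show (s.1, s.2 + 2 + 2) = s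
    rw [add_assoc, two_add_two, add_zero]
  · unfold pm
    rw [dif_neg h, dif_neg h]

lemma valid_iff (ι : Fin q → Fin q) (ω : Cell n × ZMod 4 → Fin q) :
    IsValidCarving ι (fun p d => ω (p, d)) ↔ AValid ι (pm n) ω := by
  constructor
  · intro h s hs
    by_cases hex : ∃ p' : Cell n, cellZ p' = cellZ s.1 + dirVec s.2
    · obtain ⟨p', hp'⟩ := hex
      rw [pm_eq s p' hp']
      exact h s.1 p' s.2 hp'
    · exfalso
      apply hs
      unfold pm
      rw [dif_neg hex]
  · intro h p p' d hrel
    have h1 : pm n (p, d) = (p', d + 2) := pm_eq (p, d) p' hrel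
    have h2 : pm n (p, d) ≠ (p, d) := by
      rw [h1]
      intro hc
      exact add_two_ne d (congrArg Prod.snd hc)
    have h3 := h (p, d) h2
    rw [h1] at h3
    exact h3

lemma exists_valid (ι : Fin q → Fin q) (hq : 1 ≤ q) (hι : ∀ j, ι (ι j) = j) :
    ∃ Ω : Carving n q, IsValidCarving ι Ω := by
  refine ⟨fun p d => if d = 0 ∨ d = 1 then ⟨0, hq⟩ else ι ⟨0, hq⟩, ?_⟩
  intro p p' d _
  rcases zmod4_cases d with h | h | h | h <;> subst h <;> beta_reduce
  · rw [if_neg (by decide), if_pos (by decide)]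
  · rw [if_neg (by decide), if_pos (by decide)]
  · rw [if_pos (by decide), if_neg (by decide), hι]
  · rw [if_pos (by decide), if_neg (by decide), hι]

/-- The two piece sides across a contour edge. -/
def toC (A : PartialAssembly n) (x : Cell n × Cell n × Fin 2) :
    (Cell n × ZMod 4) × (Cell n × ZMod 4) :=
  ((x.1, (x.2.2.val : ZMod 4) - A.rot x.1), (x.2.1, (x.2.2.val : ZMod 4) + 2 - A.rot x.2.1))

lemma mem_contour {A : PartialAssembly n} {x : Cell n × Cell n × Fin 2} :
    x ∈ contourEdges A ↔
      x.1 ∈ A.pieces ∧ x.2.1 ∈ A.pieces ∧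
      A.pos x.2.1 = A.pos x.1 + dirVec (x.2.2.val : ZMod 4) ∧
      ¬ (A.rot x.2.1 = A.rot x.1 ∧
          cellZ x.2.1 = cellZ x.1 + dirVec ((x.2.2.val : ZMod 4) - A.rot x.1)) := by
  unfold contourEdges
  simp only [Finset.mem_filter, Finset.mem_univ, true_and]

lemma side1_inj {A : PartialAssembly n} {x y : Cell n × Cell n × Fin 2}
    (hx : x ∈ contourEdges A) (hy : y ∈ contourEdges A)
    (h : (toC A x).1 = (toC A y).1) : x = y := by
  rw [mem_contour] at hx hy
  rw [Prod.ext_iff] at h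
  have h1 : x.1 = y.1 := h.1
  have h2 : (x.2.2.val : ZMod 4) - A.rot x.1 = (y.2.2.val : ZMod 4) - A.rot y.1 := h.2
  rw [h1] at h2
  have h3 : (x.2.2.val : ZMod 4) = (y.2.2.val : ZMod 4) := by
    have := sub_left_injective h2
    exact this
  have h4 : x.2.2 = y.2.2 := fin2_cast_inj _ _ h3
  have h5 : A.pos x.2.1 = A.pos y.2.1 := by
    rw [hx.2.2.1, hy.2.2.1, h1, h3]
  have h6 : x.2.1 = y.2.1 := A.pos_inj _ hx.2.1 _ hy.2.1 h5
  exact Prod.ext h1 (Prod.ext h6 h4)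

lemma side2_inj {A : PartialAssembly n} {x y : Cell n × Cell n × Fin 2}
    (hx : x ∈ contourEdges A) (hy : y ∈ contourEdges A)
    (h : (toC A x).2 = (toC A y).2) : x = y := by
  rw [mem_contour] at hx hy
  rw [Prod.ext_iff] at h
  have h1 : x.2.1 = y.2.1 := h.1
  have h2 : (x.2.2.val : ZMod 4) + 2 - A.rot x.2.1 = (y.2.2.val : ZMod 4) + 2 - A.rot y.2.1 := h.2
  rw [h1] at h2
  have h3 : (x.2.2.val : ZMod 4) = (y.2.2.val : ZMod 4) := by
    have := sub_left_injective h2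
    exact add_right_cancel this
  have h4 : x.2.2 = y.2.2 := fin2_cast_inj _ _ h3
  have h5 : A.pos x.1 + dirVec (x.2.2.val : ZMod 4) = A.pos y.1 + dirVec (x.2.2.val : ZMod 4) := by
    rw [← hx.2.2.1, h3, ← hy.2.2.1, h1]
  have h6 : A.pos x.1 = A.pos y.1 := add_right_cancel h5
  have h7 : x.1 = y.1 := A.pos_inj _ hx.1 _ hy.1 h6
  exact Prod.ext h7 (Prod.ext h1 h4)

lemma side1_ne_side2 {A : PartialAssembly n} (x y : Cell n × Cell n × Fin 2) :
    (toC A x).1 ≠ (toC A y).2 := by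
  intro h
  rw [Prod.ext_iff] at h
  have h1 : x.1 = y.2.1 := h.1
  have h2 : (x.2.2.val : ZMod 4) - A.rot x.1 = (y.2.2.val : ZMod 4) + 2 - A.rot y.2.1 := h.2
  rw [h1] at h2
  have h3 : (x.2.2.val : ZMod 4) = (y.2.2.val : ZMod 4) + 2 := sub_left_injective h2
  exact fin2_ne_add_two _ _ h3

lemma pm_side1_ne_side2 {A : PartialAssembly n} {x : Cell n × Cell n × Fin 2}
    (hx : x ∈ contourEdges A) : pm n (toC A x).1 ≠ (toC A x).2 := by
  rw [mem_contour] at hx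
  by_cases hex : ∃ p' : Cell n,
      cellZ p' = cellZ (toC A x).1.1 + dirVec (toC A x).1.2
  · obtain ⟨p', hp'⟩ := hex
    rw [pm_eq _ p' hp']
    intro hc
    rw [Prod.ext_iff] at hc
    have hfst : p' = x.2.1 := hc.1
    have hsnd : (x.2.2.val : ZMod 4) - A.rot x.1 + 2
        = (x.2.2.val : ZMod 4) + 2 - A.rot x.2.1 := hc.2
    have hrot : A.rot x.2.1 = A.rot x.1 := by linear_combination hsnd
    apply hx.2.2.2
    refine ⟨hrot, ?_⟩
    rw [hfst] at hp'
    exact hp'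
  · intro hc
    apply side1_ne_side2 (A := A) x x
    calc (toC A x).1 = pm n (toC A x).1 := by unfold pm; rw [dif_neg hex]
      _ = (toC A x).2 := hc

lemma toC_injOn (A : PartialAssembly n) : Set.InjOn (toC A) (contourEdges A) := by
  intro x hx y hy h
  rw [Prod.ext_iff] at h
  exact side1_inj hx hy h.1

/-- The constraint set associated to the contour edges. -/
def TE (A : PartialAssembly n) : Finset ((Cell n × ZMod 4) × (Cell n × ZMod 4)) :=
  (contourEdges A).image (toC A)

lemma TE_card (A : PartialAssembly n) : (TE A).card = (contourEdges A).card :=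
  Finset.card_image_of_injOn (toC_injOn A)

lemma good_TE (A : PartialAssembly n) : Good (pm n) (TE A) := by
  constructor
  · intro t ht
    obtain ⟨x, hx, rfl⟩ := Finset.mem_image.1 ht
    exact ⟨side1_ne_side2 x x, pm_side1_ne_side2 hx⟩
  · intro t ht t' ht' hne
    obtain ⟨x, hx, rfl⟩ := Finset.mem_image.1 ht
    obtain ⟨y, hy, rfl⟩ := Finset.mem_image.1 ht'
    refine ⟨?_, side1_ne_side2 x y, fun h => side1_ne_side2 y x h.symm, ?_⟩
    · intro h
      exact hne (by rw [side1_inj hx hy h])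
    · intro h
      exact hne (by rw [side2_inj hx hy h])

lemma sat_TE (ι : Fin q → Fin q) (A : PartialAssembly n)
    (ω : Cell n × ZMod 4 → Fin q) (hf : A.Feasible ι (fun p d => ω (p, d))) :
    ASat ι (TE A) ω := by
  intro t ht
  obtain ⟨x, hx, rfl⟩ := Finset.mem_image.1 ht
  rw [mem_contour] at hx
  exact hf x.1 hx.1 x.2.1 hx.2.1 (x.2.2.val : ZMod 4) hx.2.2.1

open scoped Classical in
lemma sm_TE (ι : Fin q → Fin q) (A : PartialAssembly n) (ω : Cell n × ZMod 4 → Fin q) :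
    contourSM ι A (fun p d => ω (p, d)) = asm ι (TE A) ω := by
  unfold contourSM asm acnt
  refine Finset.sum_congr (Finset.filter_congr fun j _ => Iff.rfl) ?_
  intro j _
  congr 1
  have h1 : (TE A).filter (fun t => ω t.1 = j ∨ ω t.1 = ι j)
      = ((contourEdges A).filter fun x =>
          ω ((toC A x).1) = j ∨ ω ((toC A x).1) = ι j).image (toC A) := by
    unfold TE
    rw [Finset.filter_image]
  rw [h1, Finset.card_image_of_injOn ((toC_injOn A).mono (Finset.filter_subset _ _))]
  exact congrArg Finset.card (Finset.filter_congr fun x _ => Iff.rfl)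

lemma card_filter_curry (P : Carving n q → Prop) [DecidablePred P]
    [DecidablePred fun ω : Cell n × ZMod 4 → Fin q => P (fun p d => ω (p, d))] :
    (Finset.univ.filter P).card
      = (Finset.univ.filter fun ω : Cell n × ZMod 4 → Fin q =>
          P (fun p d => ω (p, d))).card := by
  apply Finset.card_nbij' (fun Ω : Carving n q => fun s : Cell n × ZMod 4 => Ω s.1 s.2)
    (fun ω : Cell n × ZMod 4 → Fin q => fun p d => ω (p, d))
  · intro a ha
    rw [Finset.mem_coe, Finset.mem_filter] at ha ⊢
    exact ⟨Finset.mem_univ _, ha.2⟩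
  · intro a ha
    rw [Finset.mem_coe, Finset.mem_filter] at ha ⊢
    exact ⟨Finset.mem_univ _, ha.2⟩
  · intro a _
    rfl
  · intro a _
    rfl

end Concrete

end Stmt10


theorem statement_10 (n q : ℕ) (hn : 1 ≤ n) (hq : 2 ≤ q)
    (ι : Fin q → Fin q) (hι : ι ∘ ι = id)
    (A : PartialAssembly n) (i : ℕ) :
    puzzleProb ι (fun ω : Carving n q => A.Feasible ι ω ∧ contourSM ι A ω ≤ i) ≤
      (q : ℝ) ^ (-((contourEdges A).card : ℤ) + (i : ℤ)) := by
  classical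
  have hι' : ∀ j, ι (ι j) = j := fun j => congrFun hι j
  set Ec := (contourEdges A).card with hEc
  -- the key counting inequality over natural numbers
  have keyNat :
      (Finset.univ.filter fun ω : Carving n q =>
        IsValidCarving ι ω ∧ A.Feasible ι ω ∧ contourSM ι A ω ≤ i).card * q ^ Ec ≤
      (Finset.univ.filter fun ω : Carving n q => IsValidCarving ι ω).card * q ^ i := by
    rw [Stmt10.card_filter_curry (fun ω : Carving n q =>
        IsValidCarving ι ω ∧ A.Feasible ι ω ∧ contourSM ι A ω ≤ i),
      Stmt10.card_filter_curry (fun ω : Carving n q => IsValidCarving ι ω)]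
    have hsub : (Finset.univ.filter fun ω : Cell n × ZMod 4 → Fin q =>
          IsValidCarving ι (fun p d => ω (p, d)) ∧
          A.Feasible ι (fun p d => ω (p, d)) ∧
          contourSM ι A (fun p d => ω (p, d)) ≤ i) ⊆
        (Finset.univ.filter fun ω : Cell n × ZMod 4 → Fin q =>
          Stmt10.AValid ι (Stmt10.pm n) ω ∧ Stmt10.ASat ι (Stmt10.TE A) ω ∧
          Stmt10.asm ι (Stmt10.TE A) ω ≤ i) := by
      intro ω hω
      rw [Finset.mem_filter] at hω ⊢
      refine ⟨Finset.mem_univ _, (Stmt10.valid_iff ι ω).1 hω.2.1,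
        Stmt10.sat_TE ι A ω hω.2.2.1, ?_⟩
      rw [← Stmt10.sm_TE ι A ω]
      exact hω.2.2.2
    have habs := Stmt10.abstract_bound ι (Stmt10.pm n) hι' Stmt10.pm_invol (by omega)
      (Stmt10.TE A).card (Stmt10.TE A) rfl (Stmt10.good_TE A) i
    have hdeq : (Finset.univ.filter fun ω : Cell n × ZMod 4 → Fin q =>
          Stmt10.AValid ι (Stmt10.pm n) ω).card =
        (Finset.univ.filter fun ω : Cell n × ZMod 4 → Fin q =>
          IsValidCarving ι (fun p d => ω (p, d))).card :=
      congrArg Finset.card (Finset.filter_congr fun ω _ => (Stmt10.valid_iff ι ω).symm)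
    calc (Finset.univ.filter fun ω : Cell n × ZMod 4 → Fin q =>
            IsValidCarving ι (fun p d => ω (p, d)) ∧
            A.Feasible ι (fun p d => ω (p, d)) ∧
            contourSM ι A (fun p d => ω (p, d)) ≤ i).card * q ^ Ec
        ≤ (Finset.univ.filter fun ω : Cell n × ZMod 4 → Fin q =>
            Stmt10.AValid ι (Stmt10.pm n) ω ∧ Stmt10.ASat ι (Stmt10.TE A) ω ∧
            Stmt10.asm ι (Stmt10.TE A) ω ≤ i).card * q ^ Ec :=
          Nat.mul_le_mul_right _ (Finset.card_le_card hsub)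
      _ = (Finset.univ.filter fun ω : Cell n × ZMod 4 → Fin q =>
            Stmt10.AValid ι (Stmt10.pm n) ω ∧ Stmt10.ASat ι (Stmt10.TE A) ω ∧
            Stmt10.asm ι (Stmt10.TE A) ω ≤ i).card * q ^ (Stmt10.TE A).card := by
          rw [Stmt10.TE_card, hEc]
      _ ≤ (Finset.univ.filter fun ω : Cell n × ZMod 4 → Fin q =>
            Stmt10.AValid ι (Stmt10.pm n) ω).card * q ^ i := habs
      _ = (Finset.univ.filter fun ω : Cell n × ZMod 4 → Fin q =>
            IsValidCarving ι (fun p d => ω (p, d))).card * q ^ i := by rw [hdeq]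
  -- positivity of the denominator
  have hval0 := Stmt10.exists_valid (n := n) ι (by omega) hι'
  have hDpos : 0 < (Finset.univ.filter fun ω : Carving n q =>
      IsValidCarving ι ω).card :=
    Finset.card_pos.2 ⟨hval0.choose, Finset.mem_filter.2
      ⟨Finset.mem_univ _, hval0.choose_spec⟩⟩
  -- pass to the reals
  have hq0 : (0 : ℝ) < (q : ℝ) := by
    exact_mod_cast (by omega : 0 < q)
  have hcards : puzzleProb ι (fun ω : Carving n q =>
        A.Feasible ι ω ∧ contourSM ι A ω ≤ i)
      = ((Finset.univ.filter fun ω : Carving n q =>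
          IsValidCarving ι ω ∧ A.Feasible ι ω ∧ contourSM ι A ω ≤ i).card : ℝ) /
        ((Finset.univ.filter fun ω : Carving n q => IsValidCarving ι ω).card : ℝ) := by
    unfold puzzleProb
    congr 2
    any_goals norm_cast
    all_goals apply congrArg Finset.card
    all_goals ext ω
    all_goals simp only [Finset.mem_filter]
  have hDR : (0 : ℝ) < ((Finset.univ.filter fun ω : Carving n q =>
      IsValidCarving ι ω).card : ℝ) := by exact_mod_cast hDpos
  rw [hcards, div_le_iff₀ hDR]
  have hzp : (q : ℝ) ^ (-(Ec : ℤ) + (i : ℤ)) = (q : ℝ) ^ (i : ℕ) / (q : ℝ) ^ (Ec : ℕ) := by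
    rw [zpow_add₀ (ne_of_gt hq0), zpow_neg, zpow_natCast, zpow_natCast, inv_mul_eq_div]
  rw [hzp, div_mul_eq_mul_div, le_div_iff₀ (pow_pos hq0 Ec)]
  calc ((Finset.univ.filter fun ω : Carving n q =>
          IsValidCarving ι ω ∧ A.Feasible ι ω ∧ contourSM ι A ω ≤ i).card : ℝ) * (q : ℝ) ^ Ec
      = (((Finset.univ.filter fun ω : Carving n q =>
          IsValidCarving ι ω ∧ A.Feasible ι ω ∧ contourSM ι A ω ≤ i).card * q ^ Ec : ℕ) : ℝ) := by
        push_cast; ring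
    _ ≤ (((Finset.univ.filter fun ω : Carving n q =>
          IsValidCarving ι ω).card * q ^ i : ℕ) : ℝ) := by exact_mod_cast keyNat
    _ = (q : ℝ) ^ i * ((Finset.univ.filter fun ω : Carving n q =>
          IsValidCarving ι ω).card : ℝ) := by push_cast; ring
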